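/- arXiv:0902.0833 — 4 statements merged into one kernel-verified Lean document; each statement's English description precedes it below -/
import Mathlib

section
/- Every β ∈ B_3^{+*} has at least one code, and the set of all codes of β possesses a greatest element with respect to the ordering <_right. -/
/-- The defining relations of the braid group on `n` strands, inside the free group on
generators indexed by `ℕ`.  Generator `i` corresponds to the Artin generator `σ_i`
(for `1 ≤ i ≤ n-1`); generators with index `0` or `≥ n` are killed. -/
def braidRels (n : ℕ) : Set (FreeGroup ℕ) :=
  {r | (∃ i j : ℕ, 1 ≤ i ∧ i + 2 ≤ j ∧ j ≤ n - 1 ∧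
          r = FreeGroup.of i * FreeGroup.of j * (FreeGroup.of i)⁻¹ * (FreeGroup.of j)⁻¹) ∨
       (∃ i : ℕ, 1 ≤ i ∧ i + 1 ≤ n - 1 ∧
          r = FreeGroup.of i * FreeGroup.of (i+1) * FreeGroup.of i *
              (FreeGroup.of (i+1) * FreeGroup.of i * FreeGroup.of (i+1))⁻¹) ∨
       (∃ i : ℕ, (i = 0 ∨ n ≤ i) ∧ r = FreeGroup.of i)}

/-- The braid group `B_n` on `n` strands. -/
abbrev Braid (n : ℕ) := PresentedGroup (braidRels n)

/-- The Artin generator `σ_i` of `B_n`. -/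
def genσ (n i : ℕ) : Braid n := PresentedGroup.of i

/-- The band generator `a_{i,j} = (σ_{j-1} ⋯ σ_{i+1}) σ_i (σ_{i+1}⁻¹ ⋯ σ_{j-1}⁻¹)`. -/
def band (n i j : ℕ) : Braid n :=
  (((List.range' (i+1) (j-1-i)).reverse.map (genσ n)).prod) * genσ n i *
    (((List.range' (i+1) (j-1-i)).reverse.map (genσ n)).prod)⁻¹

/-- The dual braid monoid `B_n^{+*}`: the submonoid of `B_n` generated by the band
generators `a_{i,j}`, `1 ≤ i < j ≤ n`. -/
def dualMonoid (n : ℕ) : Submonoid (Braid n) :=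
  Submonoid.closure {x | ∃ i j : ℕ, 1 ≤ i ∧ i < j ∧ j ≤ n ∧ x = band n i j}

/-- The submonoid `B_I^{+*}` generated by the band generators `a_{i,j}` with `i, j ∈ I`. -/
def dualMonoidOn (n : ℕ) (I : Set ℕ) : Submonoid (Braid n) :=
  Submonoid.closure {x | ∃ i j : ℕ, i ∈ I ∧ j ∈ I ∧ 1 ≤ i ∧ i < j ∧ j ≤ n ∧ x = band n i j}

/-- Evaluation of a word in the letters `σ_i^{±1}` (a letter is a pair of an index and a
sign, `true` meaning positive). -/
def evalWord (n : ℕ) (w : List (ℕ × Bool)) : Braid n :=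
  (w.map (fun p => if p.2 then genσ n p.1 else (genσ n p.1)⁻¹)).prod

/-- `γ` is `σ_i`-positive: it is represented by a word in the letters `σ_1^{±1}, …,
σ_{n-1}^{±1}` containing at least one `σ_i`, no `σ_i⁻¹`, and no `σ_j^{±1}` with `j < i`. -/
def SigmaPositive (n i : ℕ) (γ : Braid n) : Prop :=
  ∃ w : List (ℕ × Bool),
    (∀ p ∈ w, 1 ≤ p.1 ∧ p.1 ≤ n - 1) ∧
    (i, true) ∈ w ∧ (i, false) ∉ w ∧
    (∀ p ∈ w, i ≤ p.1) ∧
    evalWord n w = γ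

/-- The Dehornoy ordering on `B_n`: `α <_D β` iff `α⁻¹β` is `σ_i`-positive for some `i`. -/
def dehornoyLt (n : ℕ) (α β : Braid n) : Prop :=
  ∃ i : ℕ, 1 ≤ i ∧ i ≤ n - 1 ∧ SigmaPositive n i (α⁻¹ * β)

/-- For `t ≥ -1`: `g_t = a_{1,2}` if `t ≡ 0 (mod 3)`, `g_t = a_{1,3}` if `t ≡ 1`,
and `g_t = a_{2,3}` if `t ≡ 2`. -/
def g3 (t : ℤ) : Braid 3 :=
  if t % 3 = 0 then band 3 1 2 else if t % 3 = 1 then band 3 1 3 else band 3 2 3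

/-- The product `g_t^{c_t} g_{t-1}^{c_{t-1}} ⋯ g_0^{c_0} g_{-1}^{c_{-1}}` (for `t ≥ -1`). -/
def tailProd3 (c : ℤ → ℕ) (t : ℤ) : Braid 3 :=
  ((List.range (t + 2).toNat).map (fun k => g3 (t - k) ^ c (t - k))).prod

/-- `c` is a code of `β ∈ B_3^{+*}`: `c` vanishes below `-1`, and for some `m` with
`c_t = 0` for all `t > m` one has `β = g_m^{c_m} ⋯ g_{-1}^{c_{-1}}`. -/
def IsCode3 (β : Braid 3) (c : ℤ → ℕ) : Prop :=
  (∀ t : ℤ, t < -1 → c t = 0) ∧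
  ∃ m : ℕ, (∀ t : ℤ, (m : ℤ) < t → c t = 0) ∧ β = tailProd3 c (m : ℤ)

/-- `c <_left c'`: at the largest index `l` where they differ, `c_l < c'_l`. -/
def codeLtLeft (c c' : ℤ → ℕ) : Prop :=
  ∃ l : ℤ, c l < c' l ∧ ∀ t : ℤ, l < t → c t = c' t

/-- `c <_right c'`: at the smallest index `l` where they differ, `c_l < c'_l`. -/
def codeLtRight (c c' : ℤ → ℕ) : Prop :=
  ∃ l : ℤ, c l < c' l ∧ ∀ t : ℤ, t < l → c t = c' t

/-- `c` is the `<_right`-greatest code of `β`. -/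
def IsGreatestCode3 (β : Braid 3) (c : ℤ → ℕ) : Prop :=
  IsCode3 β c ∧ ∀ c' : ℤ → ℕ, IsCode3 β c' → c' ≠ c → codeLtRight c' c

-- abelianization-style homomorphism
noncomputable def phi3 : Braid 3 →* Multiplicative ℤ :=
  PresentedGroup.toGroup (f := fun i => if i = 0 ∨ 3 ≤ i then 1 else Multiplicative.ofAdd 1)
    (by
      rintro r (⟨i, j, hi, hij, hj, rfl⟩ | ⟨i, hi, hi2, rfl⟩ | ⟨i, hi, rfl⟩)
      · omega
      · have : i = 1 := by omega
        subst this
        simp only [FreeGroup.lift_apply_of, map_mul, map_inv]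
        norm_num
      · simp [FreeGroup.lift_apply_of, hi])

lemma phi3_genσ (i : ℕ) : phi3 (genσ 3 i) =
    if i = 0 ∨ 3 ≤ i then 1 else Multiplicative.ofAdd 1 := by
  simp [phi3, genσ, PresentedGroup.toGroup.of]

lemma band312 : band 3 1 2 = genσ 3 1 := by simp [band]
lemma band323 : band 3 2 3 = genσ 3 2 := by simp [band]
lemma band313 : band 3 1 3 = genσ 3 2 * genσ 3 1 * (genσ 3 2)⁻¹ := by
  simp [band, List.range']

lemma phi3_g3 (t : ℤ) : phi3 (g3 t) = Multiplicative.ofAdd 1 := by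
  unfold g3
  split
  · rw [band312, phi3_genσ]; norm_num
  split
  · rw [band313]; simp [phi3_genσ]
  · rw [band323, phi3_genσ]; norm_num

lemma listBindPure {α β : Type} (l : List α) (f : α → β) :
    (l.flatMap fun a => [f a]) = l.map f := by
  induction l <;> simp_all

lemma tailProd3_def' (c : ℤ → ℕ) (t : ℤ) :
    tailProd3 c t
      = ((List.range (t+2).toNat).map (fun k : ℕ => g3 (t - (k:ℤ)) ^ c (t - (k:ℤ)))).prod := by
  unfold tailProd3
  rw [show (do let a ← List.range (t + 2).toNat; pure ((a : ℤ)))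
        = (List.range (t+2).toNat).map (fun a : ℕ => (a:ℤ)) from listBindPure _ _,
      List.map_map]
  rfl

lemma g3_congr {s t : ℤ} (h : s % 3 = t % 3) : g3 s = g3 t := by
  unfold g3; rw [h]

lemma tailProd3_step (c : ℤ → ℕ) (t : ℤ) (ht : -1 ≤ t) :
    tailProd3 c (t + 1) = g3 (t + 1) ^ c (t + 1) * tailProd3 c t := by
  rw [tailProd3_def', tailProd3_def']
  have h1 : (t + 1 + 2).toNat = (t + 2).toNat + 1 := by omega
  rw [h1, List.range_succ_eq_map, List.map_cons, List.prod_cons]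
  congr 2
  · norm_num
  · norm_num
  · rw [List.map_map]
    apply List.map_congr_left
    intro k _
    simp only [Function.comp, Nat.succ_eq_add_one]
    push_cast
    ring_nf

lemma tailProd3_congr {c c' : ℤ → ℕ} (t : ℤ) (h : ∀ s : ℤ, s ≤ t → c s = c' s) :
    tailProd3 c t = tailProd3 c' t := by
  rw [tailProd3_def', tailProd3_def']
  congr 1
  apply List.map_congr_left
  intro k _
  rw [h _ (by omega)]

lemma tailProd3_stable (c : ℤ → ℕ) (m : ℤ) (hm : -1 ≤ m) (n : ℕ)
    (h : ∀ s : ℤ, m < s → s ≤ m + n → c s = 0) :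
    tailProd3 c (m + n) = tailProd3 c m := by
  induction n with
  | zero => norm_num
  | succ n ih =>
    have he : (m + ((n:ℕ)+1) : ℤ) = (m + n) + 1 := by push_cast; ring
    push_cast
    rw [show (m + ((n:ℤ)+1) : ℤ) = (m + (n:ℤ)) + 1 by ring, tailProd3_step c (m+(n:ℤ)) (by omega)]
    rw [h (m+(n:ℤ)+1) (by omega) (by push_cast; omega)]
    rw [pow_zero, one_mul]
    exact ih (fun s hs hs' => h s hs (by omega))

lemma code_one : IsCode3 1 (fun _ => 0) := by
  refine ⟨fun _ _ => rfl, 0, fun _ _ => rfl, ?_⟩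
  rw [tailProd3_def']
  simp

lemma code_prepend (s : ℤ) (β : Braid 3) (c : ℤ → ℕ) (h : IsCode3 β c) :
    ∃ c', IsCode3 (g3 s * β) c' := by
  obtain ⟨hlow, m, hhigh, hprod⟩ := h
  set s' : ℤ := (m : ℤ) + 1 + (s - ((m : ℤ) + 1)) % 3 with hs'
  have hm3 : 0 ≤ (s - ((m : ℤ) + 1)) % 3 ∧ (s - ((m : ℤ) + 1)) % 3 < 3 := by omega
  have hs'range : (m : ℤ) + 1 ≤ s' ∧ s' ≤ (m : ℤ) + 3 := by constructor <;> omega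
  have hs'mod : s' % 3 = s % 3 := by omega
  have htn : ((s'.toNat : ℤ)) = s' := Int.toNat_of_nonneg (by omega)
  refine ⟨Function.update c s' 1, ?_, s'.toNat, ?_, ?_⟩
  · intro t ht
    rw [Function.update_of_ne (by omega)]
    exact hlow t ht
  · intro t ht
    rw [htn] at ht
    rw [Function.update_of_ne (by omega)]
    exact hhigh t (by omega)
  · rw [htn]
    have hstep : tailProd3 (Function.update c s' 1) s'
        = g3 s' ^ (Function.update c s' 1 s') * tailProd3 (Function.update c s' 1) (s' - 1) := by
      have := tailProd3_step (Function.update c s' 1) (s' - 1) (by omega)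
      rw [show s' - 1 + 1 = s' by ring] at this
      exact this
    rw [hstep, Function.update_self, pow_one]
    have hcongr : tailProd3 (Function.update c s' 1) (s' - 1) = tailProd3 c (s' - 1) :=
      tailProd3_congr _ (fun u hu => Function.update_of_ne (by omega) _ _)
    have hstab : tailProd3 c (s' - 1) = tailProd3 c (m : ℤ) := by
      have hn : ((s' - 1 - (m:ℤ)).toNat : ℤ) = s' - 1 - (m:ℤ) := Int.toNat_of_nonneg (by omega)
      have := tailProd3_stable c (m : ℤ) (by omega) (s' - 1 - (m:ℤ)).toNat
        (fun u hu hu' => hhigh u hu)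
      rw [hn, show (m:ℤ) + (s' - 1 - (m:ℤ)) = s' - 1 by ring] at this
      exact this
    rw [hcongr, hstab, ← hprod, g3_congr hs'mod]

lemma g3_0 : g3 0 = band 3 1 2 := by unfold g3; norm_num
lemma g3_1 : g3 1 = band 3 1 3 := by unfold g3; norm_num
lemma g3_2 : g3 2 = band 3 2 3 := by unfold g3; norm_num

lemma exists_code (β : Braid 3) (hβ : β ∈ dualMonoid 3) : ∃ c, IsCode3 β c := by
  unfold dualMonoid at hβ
  induction hβ using Submonoid.closure_induction_left with
  | one => exact ⟨_, code_one⟩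
  | mul_left x hx y hy ih =>
    obtain ⟨c, hc⟩ := ih
    obtain ⟨i, j, hi, hij, hj, rfl⟩ := hx
    have hi2 : i ≤ 2 := by omega
    interval_cases i <;> interval_cases j
    · exact g3_0 ▸ code_prepend 0 y c hc
    · exact g3_1 ▸ code_prepend 1 y c hc
    · exact g3_2 ▸ code_prepend 2 y c hc

lemma phi3_tailProd (c : ℤ → ℕ) (n : ℕ) :
    phi3 (tailProd3 c ((n:ℤ) - 1))
      = Multiplicative.ofAdd ((∑ k ∈ Finset.range (n+1), c ((k:ℤ) - 1) : ℕ) : ℤ) := by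
  induction n with
  | zero =>
    rw [tailProd3_def']
    norm_num [List.range_succ]
    rw [phi3_g3, ← ofAdd_nsmul]
    congr 1
    simp
  | succ n ih =>
    rw [show ((n+1:ℕ):ℤ) - 1 = ((n:ℤ)-1)+1 by push_cast; ring,
      tailProd3_step _ _ (by omega), map_mul, map_pow, phi3_g3, ih]
    conv_rhs => rw [Finset.sum_range_succ]
    rw [show ((n:ℤ)-1+1) = (n:ℤ) by ring, show ((n+1:ℕ):ℤ)-1 = (n:ℤ) by push_cast; ring,
      ← ofAdd_nsmul, ← ofAdd_add]
    congr 1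
    push_cast
    ring

/-- partial sums of a code over indices `-1, 0, …, n-2` -/
def Pc (c : ℤ → ℕ) (n : ℕ) : ℕ := ∑ k ∈ Finset.range n, c ((k:ℤ) - 1)

/-- total exponent bound -/
noncomputable def Nb (β : Braid 3) : ℕ := (Multiplicative.toAdd (phi3 β)).toNat

lemma code_phi {β : Braid 3} {c : ℤ → ℕ} (h : IsCode3 β c) :
    ∃ m : ℕ, phi3 β = Multiplicative.ofAdd ((Pc c (m+2) : ℕ) : ℤ) ∧
      (∀ t : ℤ, (m:ℤ) < t → c t = 0) := by
  obtain ⟨hlow, m, hhigh, hprod⟩ := h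
  refine ⟨m, ?_, hhigh⟩
  rw [hprod, show ((m:ℤ)) = ((m+1:ℕ):ℤ) - 1 by push_cast; ring, phi3_tailProd]
  rfl

lemma code_partial_le {β : Braid 3} {c : ℤ → ℕ} (h : IsCode3 β c) (n : ℕ) :
    Pc c n ≤ Nb β := by
  obtain ⟨m, hphi, hhigh⟩ := code_phi h
  have hN : Nb β = Pc c (m+2) := by rw [Nb, hphi]; simp
  rw [hN]
  rcases le_or_gt n (m+2) with hle | hlt
  · exact Finset.sum_le_sum_of_subset (Finset.range_subset_range.mpr hle)
  · have heq : Pc c (m+2) = Pc c n := by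
      refine Finset.sum_subset (Finset.range_subset_range.mpr hlt.le) ?_
      intro x hx hnx
      simp only [Finset.mem_range] at hx hnx
      exact hhigh _ (by omega)
    exact le_of_eq heq.symm

noncomputable def greedy (β : Braid 3) : ℕ → ℕ
  | n => sSup {v : ℕ | ∃ c, IsCode3 β c ∧
      (∀ (k : ℕ) (_ : k < n), c ((k:ℤ) - 1) = greedy β k) ∧ c ((n:ℤ) - 1) = v}
  termination_by n => n

/-- `c` agrees with the greedy sequence below `n` -/
def Agree (β : Braid 3) (c : ℤ → ℕ) (n : ℕ) : Prop :=
  ∀ (k : ℕ) (_ : k < n), c ((k:ℤ) - 1) = greedy β k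

lemma greedy_def (β : Braid 3) (n : ℕ) :
    greedy β n = sSup {v : ℕ | ∃ c, IsCode3 β c ∧ Agree β c n ∧ c ((n:ℤ) - 1) = v} := by
  rw [greedy]
  rfl

lemma greedy_bdd (β : Braid 3) (n : ℕ) :
    BddAbove {v : ℕ | ∃ c, IsCode3 β c ∧ Agree β c n ∧ c ((n:ℤ) - 1) = v} := by
  refine ⟨Nb β, ?_⟩
  rintro v ⟨c, hc, -, rfl⟩
  calc c ((n:ℤ) - 1) ≤ Pc c (n+1) := by
        refine Finset.single_le_sum (f := fun k : ℕ => c ((k:ℤ) - 1))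
          (fun _ _ => Nat.zero_le _) (Finset.self_mem_range_succ n)
    _ ≤ Nb β := code_partial_le hc (n+1)

lemma greedy_le {β : Braid 3} {c : ℤ → ℕ} (hc : IsCode3 β c) {n : ℕ}
    (hag : Agree β c n) : c ((n:ℤ) - 1) ≤ greedy β n := by
  rw [greedy_def]
  exact le_csSup (greedy_bdd β n) ⟨c, hc, hag, rfl⟩

lemma greedy_mem {β : Braid 3} {n : ℕ} (hne : ∃ c, IsCode3 β c ∧ Agree β c n) :
    ∃ c, IsCode3 β c ∧ Agree β c n ∧ c ((n:ℤ) - 1) = greedy β n := by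
  obtain ⟨c, hc, hag⟩ := hne
  have hmem := Nat.sSup_mem (s := {v : ℕ | ∃ c, IsCode3 β c ∧ Agree β c n ∧ c ((n:ℤ) - 1) = v})
    ⟨c ((n:ℤ) - 1), c, hc, hag, rfl⟩ (greedy_bdd β n)
  obtain ⟨c', hc', hag', hv⟩ := hmem
  exact ⟨c', hc', hag', by rw [hv, ← greedy_def]⟩

lemma agree_exists {β : Braid 3} (h0 : ∃ c, IsCode3 β c) (n : ℕ) :
    ∃ c, IsCode3 β c ∧ Agree β c n ∧ c ((n:ℤ) - 1) = greedy β n := by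
  induction n with
  | zero =>
    obtain ⟨c, hc⟩ := h0
    exact greedy_mem ⟨c, hc, fun k hk => absurd hk (Nat.not_lt_zero k)⟩
  | succ n ih =>
    obtain ⟨c, hc, hag, hval⟩ := ih
    refine greedy_mem ⟨c, hc, fun k hk => ?_⟩
    rcases Nat.lt_or_ge k n with h | h
    · exact hag k h
    · have : k = n := by omega
      subst this; exact hval

noncomputable def Gp (β : Braid 3) (n : ℕ) : ℕ := ∑ k ∈ Finset.range n, greedy β k

lemma Gp_le {β : Braid 3} (h0 : ∃ c, IsCode3 β c) (n : ℕ) : Gp β n ≤ Nb β := by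
  obtain ⟨c, hc, hag, -⟩ := agree_exists h0 n
  have : Gp β n = Pc c n := by
    refine (Finset.sum_congr rfl fun k hk => ?_).symm
    exact hag k (Finset.mem_range.mp hk)
  rw [this]
  exact code_partial_le hc n

lemma Gp_mono (β : Braid 3) {m n : ℕ} (h : m ≤ n) : Gp β m ≤ Gp β n :=
  Finset.sum_le_sum_of_subset (Finset.range_subset_range.mpr h)

lemma greedy_stab {β : Braid 3} (h0 : ∃ c, IsCode3 β c) :
    ∃ T : ℕ, ∀ n, T ≤ n → greedy β n = 0 := by
  have hR : BddAbove (Set.range (Gp β)) := ⟨Nb β, by rintro v ⟨n, rfl⟩; exact Gp_le h0 n⟩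
  obtain ⟨T, hT⟩ := Nat.sSup_mem (s := Set.range (Gp β)) ⟨Gp β 0, 0, rfl⟩ hR
  refine ⟨T, fun n hn => ?_⟩
  have h1 : Gp β (n+1) ≤ Gp β T := by
    rw [hT]; exact le_csSup hR ⟨n+1, rfl⟩
  have h2 : Gp β T ≤ Gp β n := Gp_mono β hn
  have h3 : Gp β (n+1) = Gp β n + greedy β n := Finset.sum_range_succ _ n
  omega

/-- Theorem: every `β ∈ B_3^{+*}` has at least one code, and the set of codes of `β`
has a greatest element with respect to `<_right`. -/
theorem exists_greatest_code (β : Braid 3) (hβ : β ∈ dualMonoid 3) :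
    (∃ c : ℤ → ℕ, IsCode3 β c) ∧ ∃ c : ℤ → ℕ, IsGreatestCode3 β c := by
  have h0 : ∃ c, IsCode3 β c := exists_code β hβ
  obtain ⟨T, hT⟩ := greedy_stab h0
  obtain ⟨c, hc, hagT, -⟩ := agree_exists h0 T
  have hall : ∀ n : ℕ, c ((n:ℤ) - 1) = greedy β n := by
    intro n
    induction n using Nat.strong_induction_on with
    | _ n ih =>
      rcases Nat.lt_or_ge n T with h | h
      · exact hagT n h
      · have hag : Agree β c n := fun k hk => ih k hk
        have hle := greedy_le hc hag
        rw [hT n h] at hle ⊢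
        omega
  set cstar : ℤ → ℕ := fun t => if -1 ≤ t then greedy β (t+1).toNat else 0 with hcstar
  have hceq : c = cstar := by
    funext t
    by_cases h : -1 ≤ t
    · simp only [hcstar, if_pos h]
      have h2 := hall (t+1).toNat
      rwa [show (((t+1).toNat : ℕ) : ℤ) - 1 = t by omega] at h2
    · simp only [hcstar, if_neg h]
      exact hc.1 t (by omega)
  have hcode : IsCode3 β cstar := hceq ▸ hc
  refine ⟨⟨c, hc⟩, cstar, hcode, ?_⟩
  intro c' hc' hne
  have hinh : ∃ t, c' t ≠ cstar t := Function.ne_iff.mp hne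
  have hbddb : ∀ t : ℤ, c' t ≠ cstar t → -1 ≤ t := by
    intro t h
    by_contra hlt
    push_neg at hlt
    exact h (by rw [hc'.1 t (by omega)]; simp only [hcstar, if_neg (by omega : ¬ (-1:ℤ) ≤ t)])
  obtain ⟨l, hl, hleast⟩ := Int.exists_least_of_bdd ⟨-1, hbddb⟩ hinh
  have hlge : -1 ≤ l := hbddb l hl
  set n₀ := (l+1).toNat with hn₀def
  have hn₀ : ((n₀ : ℕ) : ℤ) - 1 = l := by omega
  have hag : Agree β c' n₀ := by
    intro k hk
    have heq : c' ((k:ℤ) - 1) = cstar ((k:ℤ) - 1) := by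
      by_contra hne2
      have := hleast _ hne2
      omega
    rw [heq]
    simp only [hcstar, if_pos (by omega : (-1:ℤ) ≤ (k:ℤ) - 1)]
    congr 1
    omega
  have hle' : c' l ≤ greedy β n₀ := by
    have := greedy_le hc' hag
    rwa [hn₀] at this
  have hcl : cstar l = greedy β n₀ := by
    simp only [hcstar, if_pos hlge]
    rfl
  refine ⟨l, by omega, fun t ht => ?_⟩
  by_contra hne2
  have := hleast _ hne2
  omega
end

section
/- Let β ∈ B_3^{+*} and let c be the <_right-greatest code of β. Then for every integer t ≥ −1, c_t is the largest natural number p such that β · (g_t^{p} g_{t−1}^{c_{t−1}} ⋯ g_0^{c_0} g_{−1}^{c_{−1}})^{−1} ∈ B_3^{+*}. (That is, the C-normal form coincides with the greedy rotating normal form obtained by repeatedly extracting maximal right divisors.) -/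
lemma g3_congr_aux {a b : ℤ} (h : a % 3 = b % 3) : g3 a = g3 b := by
  unfold g3; rw [h]

private lemma coe_list_aux (l : List ℕ) :
    (do let a ← l; pure ((a:ℤ))) = l.map (fun a : ℕ => (a:ℤ)) := by
  induction l with
  | nil => rfl
  | cons a l ih => simpa using ih

def segProd (c : ℤ → ℕ) (u : ℤ) (n : ℕ) : Braid 3 :=
  ((List.range n).map (fun k : ℕ => g3 (u + n - k) ^ c (u + n - k))).prod

lemma tailProd3_eq_segProd (c : ℤ → ℕ) (t : ℤ) (ht : -2 ≤ t) :
    tailProd3 c t = segProd c (-2) (t + 2).toNat := by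
  unfold tailProd3 segProd
  rw [coe_list_aux, List.map_map]
  apply congrArg List.prod; apply List.map_congr_left
  intro a _
  have h : (-2 : ℤ) + ((t + 2).toNat : ℤ) = t := by omega
  simp only [Function.comp]
  rw [h]

lemma segProd_one (c : ℤ → ℕ) (u : ℤ) : segProd c u 1 = g3 (u + 1) ^ c (u + 1) := by
  unfold segProd; simp [List.range_succ]

lemma segProd_add (c : ℤ → ℕ) (u : ℤ) (n1 n2 : ℕ) :
    segProd c u (n1 + n2) = segProd c (u + n2) n1 * segProd c u n2 := by
  unfold segProd
  rw [List.range_add, List.map_append, List.prod_append]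
  congr 1
  · apply congrArg List.prod; apply List.map_congr_left
    intro a _; congr 2 <;> push_cast <;> ring
  · rw [List.map_map]
    apply congrArg List.prod; apply List.map_congr_left
    intro a _; simp only [Function.comp]; congr 2 <;> push_cast <;> ring

lemma segProd_congr {c1 c2 : ℤ → ℕ} {u : ℤ} {n : ℕ}
    (h : ∀ s : ℤ, u < s → s ≤ u + n → c1 s = c2 s) : segProd c1 u n = segProd c2 u n := by
  unfold segProd
  apply congrArg List.prod; apply List.map_congr_left
  intro a ha
  have ha' : a < n := List.mem_range.1 ha
  rw [h _ (by omega) (by omega)]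

lemma segProd_ones {c : ℤ → ℕ} {u : ℤ} {n : ℕ}
    (h : ∀ s : ℤ, u < s → s ≤ u + n → c s = 0) : segProd c u n = 1 := by
  unfold segProd
  apply List.prod_eq_one
  intro x hx
  obtain ⟨a, ha, rfl⟩ := List.mem_map.1 hx
  have ha' : a < n := List.mem_range.1 ha
  rw [h _ (by omega) (by omega), pow_zero]

lemma segProd_shift (d : ℤ → ℕ) (u : ℤ) (k n : ℕ) :
    segProd (fun s => d (s - 3 * (k : ℤ))) (u + 3 * k) n = segProd d u n := by
  unfold segProd
  apply congrArg List.prod; apply List.map_congr_left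
  intro a _
  show g3 (u + 3*(k:ℤ) + n - a) ^ d (u + 3*(k:ℤ) + n - a - 3*k) = _
  have h1 : u + 3 * (k:ℤ) + n - a - 3 * k = u + n - a := by ring
  rw [h1]
  congr 1
  exact g3_congr_aux (by omega)

lemma tailProd3_rec (c : ℤ → ℕ) (t : ℤ) (ht : -1 ≤ t) :
    tailProd3 c t = g3 t ^ c t * tailProd3 c (t - 1) := by
  rw [tailProd3_eq_segProd c t (by omega), tailProd3_eq_segProd c (t-1) (by omega)]
  have h : (t + 2).toNat = 1 + (t - 1 + 2).toNat := by omega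
  rw [h, segProd_add]
  have h2 : (-2 : ℤ) + ((t - 1 + 2).toNat : ℤ) = t - 1 := by omega
  rw [h2, segProd_one]
  norm_num

lemma g3_mem (s : ℤ) : g3 s ∈ dualMonoid 3 := by
  unfold g3
  split_ifs
  · exact Submonoid.subset_closure ⟨1, 2, by norm_num, by norm_num, by norm_num, rfl⟩
  · exact Submonoid.subset_closure ⟨1, 3, by norm_num, by norm_num, by norm_num, rfl⟩
  · exact Submonoid.subset_closure ⟨2, 3, by norm_num, by norm_num, by norm_num, rfl⟩

lemma segProd_mem (c : ℤ → ℕ) (u : ℤ) (n : ℕ) : segProd c u n ∈ dualMonoid 3 := by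
  apply Submonoid.list_prod_mem
  intro x hx
  obtain ⟨a, _, rfl⟩ := List.mem_map.1 hx
  exact pow_mem (g3_mem _) _

lemma exists_code3 (γ : Braid 3) (hγ : γ ∈ dualMonoid 3) : ∃ d : ℤ → ℕ, IsCode3 γ d := by
  obtain ⟨l, hl, rfl⟩ := Submonoid.exists_list_of_mem_closure hγ
  induction l with
  | nil =>
    refine ⟨fun _ => 0, fun _ _ => rfl, 0, fun _ _ => rfl, ?_⟩
    rw [tailProd3_eq_segProd _ _ (by norm_num)]
    exact (segProd_ones (fun _ _ _ => rfl)).symm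
  | cons x l ih =>
    obtain ⟨d, hd0, m, hdm, hprod⟩ := ih (fun y hy => hl y (List.mem_cons_of_mem _ hy))
      (Submonoid.list_prod_mem _ (fun y hy =>
        Submonoid.subset_closure (hl y (List.mem_cons_of_mem _ hy))))
    obtain ⟨i, j, h1, h2, h3, rfl⟩ := hl x (List.mem_cons_self)
    have hx : ∃ r : ℕ, r < 3 ∧ band 3 i j = g3 (r : ℤ) := by
      have h4 : i ≤ 2 := by omega
      interval_cases i <;> interval_cases j
      · exact ⟨0, by norm_num, by simp [g3]⟩
      · exact ⟨1, by norm_num, by simp [g3]⟩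
      · exact ⟨2, by norm_num, by simp [g3]⟩
    obtain ⟨r, hr3, hxg⟩ := hx
    set s : ℕ := 3 * (m + 1) + r with hs
    refine ⟨fun u => if u = (s:ℤ) then 1 else d u, ?_, s, ?_, ?_⟩
    · intro u hu
      show (if u = (s:ℤ) then 1 else d u) = 0
      rw [if_neg (by omega)]
      exact hd0 u hu
    · intro u hu
      show (if u = (s:ℤ) then 1 else d u) = 0
      rw [if_neg (by omega)]
      exact hdm u (by omega)
    · rw [tailProd3_rec _ _ (by omega)]
      show _ = g3 (s:ℤ) ^ (if (s:ℤ) = (s:ℤ) then 1 else d (s:ℤ)) * _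
      rw [if_pos rfl, pow_one]
      have hgs : g3 (s : ℤ) = g3 (r : ℤ) := g3_congr_aux (by omega)
      have htl : tailProd3 (fun u => if u = (s:ℤ) then 1 else d u) ((s:ℤ) - 1)
          = tailProd3 d (m : ℤ) := by
        rw [tailProd3_eq_segProd _ _ (by omega), tailProd3_eq_segProd d _ (by omega)]
        have hsplit : ((s:ℤ) - 1 + 2).toNat
            = (((s:ℤ) - 1 + 2).toNat - ((m:ℤ)+2).toNat) + ((m:ℤ)+2).toNat := by omega
        rw [hsplit, segProd_add]
        have e1 : segProd (fun u => if u = (s:ℤ) then 1 else d u) (-2 + ((m:ℤ)+2).toNat)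
            (((s:ℤ) - 1 + 2).toNat - ((m:ℤ)+2).toNat) = 1 := by
          apply segProd_ones
          intro u hu1 hu2
          rw [if_neg (by omega)]
          exact hdm u (by omega)
        have e2 : segProd (fun u => if u = (s:ℤ) then 1 else d u) (-2) ((m:ℤ)+2).toNat
            = segProd d (-2) ((m:ℤ)+2).toNat := by
          apply segProd_congr
          intro u hu1 hu2
          rw [if_neg (by omega)]
        rw [e1, e2, one_mul]
      rw [htl, hgs, ← hxg, ← hprod]
      simp

/-- Theorem: if `c` is the `<_right`-greatest code of `β ∈ B_3^{+*}`, then for every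
`t ≥ -1`, `c t` is the largest `p` such that
`β ⬝ (g_t^p g_{t-1}^{c_{t-1}} ⋯ g_{-1}^{c_{-1}})⁻¹ ∈ B_3^{+*}`. -/
theorem greatest_code_greedy (β : Braid 3) (hβ : β ∈ dualMonoid 3)
    (c : ℤ → ℕ) (hc : IsGreatestCode3 β c) (t : ℤ) (ht : -1 ≤ t) :
    IsGreatest {p : ℕ | β * (g3 t ^ p * tailProd3 c (t - 1))⁻¹ ∈ dualMonoid 3} (c t) := by
  obtain ⟨⟨hlow, m, hhigh, hβeq⟩, hgr⟩ := hc
  set k : ℕ := (t + 2).toNat with hkdef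
  have hk : (k : ℤ) = t + 2 := by rw [hkdef]; omega
  have hβseg : β = segProd c t (m + 2) * tailProd3 c t := by
    have e1 : segProd c (-2) ((m + 2) + k) = segProd c (-2 + (k:ℤ)) (m + 2) * segProd c (-2) k :=
      segProd_add c (-2) (m + 2) k
    have e2 : segProd c (-2) (k + (m + 2)) = segProd c (-2 + ((m + 2 : ℕ) : ℤ)) k
        * segProd c (-2) (m + 2) := segProd_add c (-2) k (m + 2)
    have e3 : segProd c (-2 + ((m + 2 : ℕ) : ℤ)) k = 1 := by
      apply segProd_ones
      intro s hs1 hs2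
      exact hhigh s (by omega)
    have e4 : ((m : ℤ) + 2).toNat = m + 2 := by omega
    have e5 : (-2 : ℤ) + (k : ℤ) = t := by omega
    rw [hβeq, tailProd3_eq_segProd c m (by omega), tailProd3_eq_segProd c t (by omega), e4,
      ← hkdef]
    rw [e3, one_mul] at e2
    rw [← e5, ← e2, ← e1, add_comm]
  constructor
  · -- membership
    show β * (g3 t ^ c t * tailProd3 c (t - 1))⁻¹ ∈ dualMonoid 3
    rw [← tailProd3_rec c t ht, hβseg, mul_inv_cancel_right]
    exact segProd_mem c t (m + 2)
  · -- upper bound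
    intro p hp
    by_contra hcon
    push_neg at hcon
    set γ := β * (g3 t ^ p * tailProd3 c (t - 1))⁻¹ with hγdef
    have hγmem : γ ∈ dualMonoid 3 := hp
    obtain ⟨d, hd0, mγ, hdm, hγeq⟩ := exists_code3 γ hγmem
    set c' : ℤ → ℕ := fun u => if u < t then c u else if u = t then p else d (u - 3 * (k : ℤ))
      with hc'def
    have hc'lt : ∀ u : ℤ, u < t → c' u = c u := by
      intro u hu
      show (if u < t then c u else if u = t then p else d (u - 3 * (k : ℤ))) = c u
      rw [if_pos hu]
    have hc't : c' t = p := by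
      show (if t < t then c t else if t = t then p else d (t - 3 * (k : ℤ))) = p
      rw [if_neg (lt_irrefl t), if_pos rfl]
    have hc'gt : ∀ u : ℤ, t < u → c' u = d (u - 3 * (k : ℤ)) := by
      intro u hu
      show (if u < t then c u else if u = t then p else d (u - 3 * (k : ℤ))) = _
      rw [if_neg (by omega), if_neg (by omega)]
    have key : β = tailProd3 c' ((mγ + 3 * k : ℕ) : ℤ) := by
      rw [tailProd3_eq_segProd c' _ (by omega)]
      have hN : (((mγ + 3 * k : ℕ) : ℤ) + 2).toNat = ((mγ + 2) + 2 * k) + k := by omega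
      rw [hN, segProd_add]
      have h1 : (-2 : ℤ) + (k : ℕ) = t := by omega
      rw [h1, segProd_add]
      have h2 : segProd c' t (2 * k) = 1 := by
        apply segProd_ones
        intro s hs1 hs2
        rw [hc'gt s hs1]
        exact hd0 _ (by push_cast at hs2 ⊢; omega)
      have h3 : segProd c' (t + ((2 * k : ℕ) : ℤ)) (mγ + 2) = tailProd3 d mγ := by
        have e : segProd c' (t + ((2 * k : ℕ) : ℤ)) (mγ + 2)
            = segProd (fun s => d (s - 3 * (k : ℤ))) (t + ((2 * k : ℕ) : ℤ)) (mγ + 2) := by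
          apply segProd_congr
          intro s hs1 hs2
          exact hc'gt s (by push_cast at hs1; omega)
        have h4 : t + ((2 * k : ℕ) : ℤ) = (-2) + 3 * (k : ℕ) := by push_cast; omega
        have h5 : ((mγ : ℤ) + 2).toNat = mγ + 2 := by omega
        rw [e, h4, segProd_shift d (-2) k (mγ + 2), tailProd3_eq_segProd d mγ (by omega), h5]
      have h6 : segProd c' (-2) k = g3 t ^ p * tailProd3 c (t - 1) := by
        have e : segProd c' (-2) k = tailProd3 c' t := by
          rw [tailProd3_eq_segProd c' t (by omega), hkdef]
        rw [e, tailProd3_rec c' t ht, hc't]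
        congr 1
        rw [tailProd3_eq_segProd c' (t - 1) (by omega), tailProd3_eq_segProd c (t - 1) (by omega)]
        apply segProd_congr
        intro s hs1 hs2
        exact hc'lt s (by omega)
      rw [h2, h3, h6, mul_one, ← hγeq, hγdef]
      exact (inv_mul_cancel_right β _).symm
    have hcode' : IsCode3 β c' := by
      refine ⟨fun u hu => by rw [hc'lt u (by omega)]; exact hlow u hu, mγ + 3 * k, ?_, key⟩
      intro u hu
      rw [hc'gt u (by push_cast at hu; omega)]
      exact hdm _ (by push_cast at hu ⊢; omega)
    have hne : c' ≠ c := by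
      intro he
      have := congrFun he t
      rw [hc't] at this
      omega
    obtain ⟨l, hl1, hl2⟩ := hgr c' hcode' hne
    rcases lt_trichotomy l t with h | h | h
    · rw [hc'lt l h] at hl1; omega
    · rw [h, hc't] at hl1; omega
    · have := hl2 t h
      rw [hc't] at this
      omega
end

section
/- (Push-off formula.) Let 1 ≤ i ≤ j ≤ p < q ≤ n and let β ∈ B_{{i,i+1,…,j}}^{+*}. Then there exists β' ∈ B_{{i,i+1,…,q}}^{+*} such that a_{p,q} β = β' a_{p,q} in B_n. -/
lemma rel_one (n : ℕ) {r : FreeGroup ℕ} (hr : r ∈ braidRels n) :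
    PresentedGroup.mk (braidRels n) r = 1 := by
  have : r ∈ Subgroup.normalClosure (braidRels n) := Subgroup.subset_normalClosure hr
  exact (QuotientGroup.eq_one_iff r).mpr this

lemma σ_comm (n a b : ℕ) (ha : 1 ≤ a) (hab : a + 2 ≤ b) (hb : b ≤ n - 1) :
    Commute (genσ n a) (genσ n b) := by
  have h : PresentedGroup.mk (braidRels n)
      (FreeGroup.of a * FreeGroup.of b * (FreeGroup.of a)⁻¹ * (FreeGroup.of b)⁻¹) = 1 :=
    rel_one n (Or.inl ⟨a, b, ha, hab, hb, rfl⟩)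
  simp only [map_mul, map_inv] at h
  have h2 : genσ n a * genσ n b * (genσ n a)⁻¹ * (genσ n b)⁻¹ = 1 := h
  exact commutatorElement_eq_one_iff_commute.mp h2

/-- The descending word `σ_{y-1} σ_{y-2} ⋯ σ_x`. -/
def Dw (n x y : ℕ) : Braid n := (((List.range' x (y - x)).reverse).map (genσ n)).prod

lemma comm_σ_D (n a u v : ℕ) (ha : 1 ≤ a) (hau : a + 2 ≤ u) (hv : v ≤ n) :
    Commute (genσ n a) (Dw n u v) := by
  apply Commute.list_prod_right
  intro x hx
  simp only [List.mem_map, List.mem_reverse, List.mem_range'_1] at hx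
  obtain ⟨m, ⟨hm1, hm2⟩, rfl⟩ := hx
  exact σ_comm n a m ha (by omega) (by omega)

lemma comm_D_σ (n x y b : ℕ) (hx : 1 ≤ x) (hyb : y + 1 ≤ b) (hb : b ≤ n - 1) :
    Commute (Dw n x y) (genσ n b) := by
  apply Commute.list_prod_left
  intro z hz
  simp only [List.mem_map, List.mem_reverse, List.mem_range'_1] at hz
  obtain ⟨m, ⟨hm1, hm2⟩, rfl⟩ := hz
  exact σ_comm n m b (by omega) (by omega) hb

lemma comm_D_D (n x y u v : ℕ) (hx : 1 ≤ x) (hyu : y + 1 ≤ u) (hv : v ≤ n) :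
    Commute (Dw n x y) (Dw n u v) := by
  apply Commute.list_prod_right
  intro z hz
  simp only [List.mem_map, List.mem_reverse, List.mem_range'_1] at hz
  obtain ⟨m, ⟨hm1, hm2⟩, rfl⟩ := hz
  exact comm_D_σ n x y m hx (by omega) (by omega)

lemma band_eq (n a b : ℕ) :
    band n a b = Dw n (a+1) b * genσ n a * (Dw n (a+1) b)⁻¹ := by
  unfold band Dw
  have : b - 1 - a = b - (a + 1) := by omega
  rw [this]

lemma D_cons (n x y : ℕ) (h : x < y) : Dw n x y = Dw n (x+1) y * genσ n x := by
  unfold Dw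
  obtain ⟨m, hm⟩ : ∃ m, y - x = m + 1 := ⟨y - x - 1, by omega⟩
  have h2 : y - (x + 1) = m := by omega
  rw [hm, h2, List.range'_succ, List.reverse_cons, List.map_append, List.prod_append]
  simp

lemma band_eq' (n x y : ℕ) (h : x < y) :
    band n x y = Dw n x y * (Dw n (x+1) y)⁻¹ := by
  rw [band_eq, D_cons n x y h]

lemma D_append (n k p q : ℕ) (hkp : k ≤ p) (hpq : p ≤ q) :
    Dw n k q = Dw n p q * Dw n k p := by
  unfold Dw
  have h : List.range' k (p - k) ++ List.range' p (q - p) = List.range' k (q - k) := by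
    have := @List.range'_append k (p - k) (q - p) 1
    simp only [one_mul, mul_one] at this
    rw [show k + (p - k) = p by omega] at this
    rw [show p - k + (q - p) = q - k by omega] at this
    exact this
  rw [← h, List.reverse_append, List.map_append, List.prod_append]

/-- Commutation of disjoint bands. -/
lemma band_commute (n k l p q : ℕ) (hk : 1 ≤ k) (hkl : k < l) (hlp : l < p) (hpq : p < q)
    (hq : q ≤ n) : Commute (band n p q) (band n k l) := by
  rw [band_eq n p q, band_eq n k l]
  have c1 : Commute (Dw n (k+1) l) (Dw n (p+1) q) := comm_D_D n (k+1) l (p+1) q (by omega) (by omega) hq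
  have c2 : Commute (Dw n (k+1) l) (genσ n p) := comm_D_σ n (k+1) l p (by omega) (by omega) (by omega)
  have c3 : Commute (genσ n k) (Dw n (p+1) q) := comm_σ_D n k (p+1) q hk (by omega) hq
  have c4 : Commute (genσ n k) (genσ n p) := σ_comm n k p hk (by omega) (by omega)
  have cb : Commute (Dw n (p+1) q * genσ n p * (Dw n (p+1) q)⁻¹) (Dw n (k+1) l) :=
    (((c1.symm.mul_left c2.symm).mul_left c1.symm.inv_left).symm).symm
  have cg : Commute (Dw n (p+1) q * genσ n p * (Dw n (p+1) q)⁻¹) (genσ n k) :=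
    ((c3.symm.mul_left c4.symm).mul_left c3.symm.inv_left)
  exact (cb.mul_right cg).mul_right cb.inv_right

/-- The BKL-type relation `a_{p,q} a_{k,p} = a_{k,q} a_{p,q}` for `k < p < q`. -/
lemma band_slide (n k p q : ℕ) (hk : 1 ≤ k) (hkp : k < p) (hpq : p < q) (hq : q ≤ n) :
    band n p q * band n k p = band n k q * band n p q := by
  rw [band_eq' n p q hpq, band_eq' n k p hkp, band_eq' n k q (by omega)]
  have e1 : Dw n k q = Dw n p q * Dw n k p := D_append n k p q (by omega) (by omega)
  have e2 : Dw n (k+1) q = Dw n p q * Dw n (k+1) p := D_append n (k+1) p q (by omega) (by omega)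
  have c1 : Commute ((Dw n (p+1) q)⁻¹) (Dw n k p) :=
    (comm_D_D n k p (p+1) q hk (by omega) hq).symm.inv_left
  have c2 : Commute ((Dw n (p+1) q)⁻¹) ((Dw n (k+1) p)⁻¹) :=
    ((comm_D_D n (k+1) p (p+1) q (by omega) (by omega) hq).symm.inv_left).inv_right
  calc Dw n p q * (Dw n (p+1) q)⁻¹ * (Dw n k p * (Dw n (k+1) p)⁻¹)
      = Dw n p q * ((Dw n (p+1) q)⁻¹ * Dw n k p) * (Dw n (k+1) p)⁻¹ := by group
    _ = Dw n p q * (Dw n k p * (Dw n (p+1) q)⁻¹) * (Dw n (k+1) p)⁻¹ := by rw [c1.eq]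
    _ = Dw n p q * Dw n k p * ((Dw n (p+1) q)⁻¹ * (Dw n (k+1) p)⁻¹) := by group
    _ = Dw n p q * Dw n k p * ((Dw n (k+1) p)⁻¹ * (Dw n (p+1) q)⁻¹) := by rw [c2.eq]
    _ = (Dw n p q * Dw n k p) * (Dw n p q * Dw n (k+1) p)⁻¹ * (Dw n p q * (Dw n (p+1) q)⁻¹) := by
        group
    _ = Dw n k q * (Dw n (k+1) q)⁻¹ * (Dw n p q * (Dw n (p+1) q)⁻¹) := by rw [← e1, ← e2]

/-- Theorem (push-off formula): for `1 ≤ i ≤ j ≤ p < q ≤ n` and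
`β ∈ B_{{i,…,j}}^{+*}`, there exists `β' ∈ B_{{i,…,q}}^{+*}` with
`a_{p,q} β = β' a_{p,q}`. -/
theorem pushoff_formula (n i j p q : ℕ) (h1 : 1 ≤ i) (hij : i ≤ j) (hjp : j ≤ p)
    (hpq : p < q) (hqn : q ≤ n) (β : Braid n) (hβ : β ∈ dualMonoidOn n (Set.Icc i j)) :
    ∃ β' ∈ dualMonoidOn n (Set.Icc i q), band n p q * β = β' * band n p q := by
  induction hβ using Submonoid.closure_induction with
  | mem x hx =>
      obtain ⟨k, l, hkI, hlI, hk1, hkl, hln, rfl⟩ := hx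
      rcases lt_or_eq_of_le (le_trans hlI.2 hjp) with hlp | hlp
      · refine ⟨band n k l, Submonoid.subset_closure ⟨k, l, ⟨hkI.1, by omega⟩, ⟨hlI.1, by omega⟩,
          hk1, hkl, hln, rfl⟩, ?_⟩
        exact (band_commute n k l p q hk1 hkl hlp hpq hqn).eq
      · subst hlp
        refine ⟨band n k q, Submonoid.subset_closure ⟨k, q, ⟨hkI.1, by omega⟩, ⟨le_trans hkI.1 (by omega), le_refl q⟩,
          hk1, by omega, hqn, rfl⟩, ?_⟩
        exact band_slide n k l q hk1 hkl hpq hqn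
  | one => exact ⟨1, one_mem _, by group⟩
  | mul x y hx hy ihx ihy =>
      obtain ⟨x', hx', ex⟩ := ihx
      obtain ⟨y', hy', ey⟩ := ihy
      refine ⟨x' * y', mul_mem hx' hy', ?_⟩
      calc band n p q * (x * y) = (band n p q * x) * y := by group
        _ = x' * (band n p q * y) := by rw [ex]; group
        _ = x' * (y' * band n p q) := by rw [ey]
        _ = x' * y' * band n p q := by group
end

section
/- For all indices 1 ≤ i < j < k ≤ n, the following identities hold in B_n: a_{i,j} a_{i,k} = a_{j,k} a_{i,j} = a_{i,k} a_{j,k}. -/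
lemma rel_eq_one {n : ℕ} {r : FreeGroup ℕ} (h : r ∈ braidRels n) :
    (PresentedGroup.mk (braidRels n) r : Braid n) = 1 := by
  have : r ∈ Subgroup.normalClosure (braidRels n) := Subgroup.subset_normalClosure h
  exact (QuotientGroup.eq_one_iff r).2 this

lemma genσ_trivial {n i : ℕ} (h : i = 0 ∨ n ≤ i) : genσ n i = 1 := by
  have := rel_eq_one (n := n) (r := FreeGroup.of i) (Or.inr (Or.inr ⟨i, h, rfl⟩))
  simpa [genσ, PresentedGroup.of] using this

lemma genσ_comm {n a b : ℕ} (h : a + 2 ≤ b) :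
    Commute (genσ n a) (genσ n b) := by
  rcases Nat.eq_zero_or_pos a with ha | ha
  · subst ha; rw [genσ_trivial (Or.inl rfl)]; exact Commute.one_left _
  rcases le_or_gt n b with hb | hb
  · rw [genσ_trivial (Or.inr hb)]; exact Commute.one_right _
  · have hb' : b ≤ n - 1 := Nat.le_sub_one_of_lt hb
    have h2 := rel_eq_one (n := n) (Or.inl ⟨a, b, ha, h, hb', rfl⟩)
    simp only [map_mul, map_inv] at h2
    have h3 := mul_inv_eq_one.mp h2
    have h4 := mul_inv_eq_iff_eq_mul.mp h3
    exact h4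

lemma genσ_braid {n a : ℕ} (ha : 1 ≤ a) (hb : a + 2 ≤ n) :
    genσ n a * genσ n (a+1) * genσ n a = genσ n (a+1) * genσ n a * genσ n (a+1) := by
  have h : a + 1 ≤ n - 1 := by omega
  have h2 := rel_eq_one (n := n) (Or.inr (Or.inl ⟨a, ha, h, rfl⟩))
  simp only [map_mul, map_inv] at h2
  exact mul_inv_eq_one.mp h2

lemma band_base {n i : ℕ} : band n i (i+1) = genσ n i := by
  simp [band]

lemma band_succ {n i j : ℕ} (hij : i < j) :
    band n i (j+1) = genσ n j * band n i j * (genσ n j)⁻¹ := by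
  have h1 : j + 1 - 1 - i = (j - 1 - i) + 1 := by omega
  have h2 : List.range' (i+1) ((j-1-i)+1) = List.range' (i+1) (j-1-i) ++ [i+1+1*(j-1-i)] :=
    List.range'_concat
  have h3 : i + 1 + 1*(j - 1 - i) = j := by omega
  rw [band, band, h1, h2, h3]
  simp only [List.reverse_append, List.reverse_cons, List.reverse_nil, List.nil_append,
    List.cons_append, List.map_cons, List.prod_cons, List.map, mul_inv_rev]
  group

lemma commute_prod {n c : ℕ} (l : List ℕ) (h : ∀ m ∈ l, m + 2 ≤ c) :
    Commute (genσ n c) ((l.map (genσ n)).prod) := by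
  induction l with
  | nil => simp
  | cons a t ih =>
    simp only [List.map_cons, List.prod_cons]
    exact Commute.mul_right ((genσ_comm (h a (by simp))).symm)
      (ih fun m hm => h m (by simp [hm]))

lemma commute_band {n c i j : ℕ} (hij : i < j) (h : j + 1 ≤ c) :
    Commute (genσ n c) (band n i j) := by
  have hp : Commute (genσ n c) (((List.range' (i+1) (j-1-i)).reverse.map (genσ n)).prod) := by
    apply commute_prod
    intro m hm
    rw [List.mem_reverse, List.mem_range'] at hm
    omega
  have hi : Commute (genσ n c) (genσ n i) := (genσ_comm (by omega)).symm
  exact (hp.mul_right hi).mul_right hp.inv_right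

lemma conj_braid {G : Type*} [Group G] (a s t : G) (hst : s*t*s = t*s*t)
    (ha : a*s*a = s*a*s) (hc : Commute t a) :
    (s*a*s⁻¹)*t*(s*a*s⁻¹) = t*(s*a*s⁻¹)*t := by
  have h1 : s⁻¹ * t * s = t * s * t⁻¹ := by
    calc s⁻¹*t*s = s⁻¹*(t*s*t)*t⁻¹ := by group
      _ = s⁻¹*(s*t*s)*t⁻¹ := by rw [← hst]
      _ = t*s*t⁻¹ := by group
  have h2 : t * s * t⁻¹ * s⁻¹ = s⁻¹ * t := by
    rw [← h1]; group
  calc (s*a*s⁻¹)*t*(s*a*s⁻¹)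
      = s*a*(s⁻¹*t*s)*a*s⁻¹ := by group
    _ = s*a*(t*s*t⁻¹)*a*s⁻¹ := by rw [h1]
    _ = s*(a*t)*s*(t⁻¹*a)*s⁻¹ := by group
    _ = s*(t*a)*s*(a*t⁻¹)*s⁻¹ := by rw [hc.eq, (hc.inv_left).eq]
    _ = s*t*(a*s*a)*t⁻¹*s⁻¹ := by group
    _ = s*t*(s*a*s)*t⁻¹*s⁻¹ := by rw [ha]
    _ = (s*t*s)*a*(s*t⁻¹*s⁻¹) := by group
    _ = (t*s*t)*a*(s*t⁻¹*s⁻¹) := by rw [hst]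
    _ = t*s*(t*a)*(s*t⁻¹*s⁻¹)*1 := by group
    _ = t*s*(a*t)*(s*t⁻¹*s⁻¹)*1 := by rw [hc.eq]
    _ = t*s*a*(t*s*t⁻¹*s⁻¹) := by group
    _ = t*s*a*(s⁻¹*t) := by rw [h2]
    _ = t*(s*a*s⁻¹)*t := by group

lemma band_braid {n i : ℕ} (hi : 1 ≤ i) : ∀ j, i + 1 ≤ j → j + 1 ≤ n →
    band n i j * genσ n j * band n i j = genσ n j * band n i j * genσ n j := by
  intro j hj
  induction j, hj using Nat.le_induction with
  | base => intro hn; rw [band_base]; exact genσ_braid hi (by omega)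
  | succ j hj ih =>
    intro hn
    rw [band_succ (by omega)]
    exact conj_braid (band n i j) (genσ n j) (genσ n (j+1))
      (genσ_braid (by omega) (by omega)) (ih (by omega)) (commute_band (by omega) le_rfl)

lemma band_main {n i j : ℕ} (hi : 1 ≤ i) (hij : i < j) : ∀ k, j + 1 ≤ k → k ≤ n →
    band n i j * band n i k = band n j k * band n i j ∧
    band n j k * band n i j = band n i k * band n j k := by
  intro k hk
  induction k, hk using Nat.le_induction with
  | base =>
    intro hn
    rw [band_succ hij, band_base]
    constructor
    · have hb := band_braid (n := n) hi j (by omega) (by omega)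
      calc band n i j * (genσ n j * band n i j * (genσ n j)⁻¹)
          = (band n i j * genσ n j * band n i j) * (genσ n j)⁻¹ := by group
        _ = (genσ n j * band n i j * genσ n j) * (genσ n j)⁻¹ := by rw [hb]
        _ = genσ n j * band n i j := by group
    · group
  | succ k hk ih =>
    intro hn
    obtain ⟨ih1, ih2⟩ := ih (by omega)
    have hc : Commute (genσ n k) (band n i j) := commute_band hij (by omega)
    set g := genσ n k with hg
    set a := band n i j with ha
    set b := band n i k with hb
    set c := band n j k with hcdef
    have key1 : a * (g * b * g⁻¹) = g * (a * b) * g⁻¹ := by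
      calc a * (g * b * g⁻¹) = (a * g) * b * g⁻¹ := by group
        _ = (g * a) * b * g⁻¹ := by rw [← hc.eq]
        _ = g * (a * b) * g⁻¹ := by group
    have key2 : (g * c * g⁻¹) * a = g * (c * a) * g⁻¹ := by
      calc (g * c * g⁻¹) * a = g * c * (g⁻¹ * a) := by group
        _ = g * c * (a * g⁻¹) := by rw [hc.inv_left.eq]
        _ = g * (c * a) * g⁻¹ := by group
    rw [band_succ (by omega : i < k), band_succ (by omega : j < k), ← hb, ← hcdef]
    refine ⟨?_, ?_⟩
    · rw [key1, key2, ih1]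
    · rw [key2, ih2]; group; rfl


/-- Theorem: for `1 ≤ i < j < k ≤ n`, `a_{i,j} a_{i,k} = a_{j,k} a_{i,j} = a_{i,k} a_{j,k}`
in `B_n`. -/
theorem band_triple_relations (n i j k : ℕ) (h1 : 1 ≤ i) (hij : i < j) (hjk : j < k)
    (hkn : k ≤ n) :
    band n i j * band n i k = band n j k * band n i j ∧
    band n j k * band n i j = band n i k * band n j k := by
  exact band_main h1 hij k (by omega) hkn
end
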